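/- For x, y ≠ 0, the relations x ⊥_{||·||} Gy and y ⊥_{||·||_a} Gx are equivalent, where both are equivalent to |⟨x,y⟩| = ||x|| · ||y||_a. -/

import Mathlib

/-- The dual norm of a (not necessarily linear-structure-related) functional `φ` with
respect to a norm function `N`: `‖φ‖* = sup {|φ z| : N z = 1}`. -/
noncomputable def dualNorm {X : Type*} (N : X → ℝ) (φ : X → ℝ) : ℝ :=
  sSup {r : ℝ | ∃ z : X, N z = 1 ∧ r = |φ z|}

/-- `x ⊥_N φ` iff `|φ x| = N x ⬝ ‖φ‖*`, i.e. the level surface of `φ` through `x`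
supports the ball `N x ⬝ B`. -/
def Perp {X : Type*} (N : X → ℝ) (x : X) (φ : X → ℝ) : Prop :=
  |φ x| = N x * dualNorm N φ

/-- The antinorm: `‖x‖ₐ = sup {⟨y,x⟩ : ‖y‖ = 1}`. -/
noncomputable def antinorm {X : Type*} [NormedAddCommGroup X] [NormedSpace ℝ X]
    (ω : X →ₗ[ℝ] X →ₗ[ℝ] ℝ) (x : X) : ℝ :=
  sSup {r : ℝ | ∃ y : X, ‖y‖ = 1 ∧ r = ω y x}

section Aux

variable {X : Type*} [NormedAddCommGroup X] [NormedSpace ℝ X]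
  [FiniteDimensional ℝ X] [Nontrivial X]

/-- Norm of a functional is attained on the unit sphere (finite dim). -/
lemma exists_unit_norming (f : X →L[ℝ] ℝ) : ∃ u : X, ‖u‖ = 1 ∧ |f u| = ‖f‖ := by
  obtain ⟨u0, hu0⟩ : (Metric.sphere (0:X) 1).Nonempty :=
    NormedSpace.sphere_nonempty.2 zero_le_one
  have hcpt : IsCompact (Metric.sphere (0:X) 1) := isCompact_sphere 0 1
  obtain ⟨u, hu, hmax⟩ := hcpt.exists_isMaxOn ⟨u0, hu0⟩
    (continuous_norm.comp f.continuous).continuousOn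
  have hu1 : ‖u‖ = 1 := by simpa using mem_sphere_zero_iff_norm.1 hu
  refine ⟨u, hu1, le_antisymm ?_ ?_⟩
  · calc |f u| = ‖f u‖ := rfl
      _ ≤ ‖f‖ * ‖u‖ := f.le_opNorm u
      _ = ‖f‖ := by rw [hu1, mul_one]
  · refine f.opNorm_le_bound (abs_nonneg _) fun v => ?_
    rcases eq_or_ne v 0 with rfl | hv
    · simp
    · have hvn : ‖v‖ ≠ 0 := norm_ne_zero_iff.2 hv
      have hmem : (‖v‖⁻¹ • v) ∈ Metric.sphere (0:X) 1 := by
        simp [norm_smul, abs_of_nonneg (norm_nonneg v), inv_mul_cancel₀ hvn]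
      have := hmax hmem
      simp only [IsMaxOn, IsMaxFilter, Set.mem_setOf_eq, Function.comp_apply, map_smul,
        norm_smul, norm_mul, norm_inv, norm_norm, smul_eq_mul] at this
      calc ‖f v‖ = ‖v‖ * (‖v‖⁻¹ * ‖f v‖) := by field_simp
        _ ≤ ‖v‖ * ‖f u‖ := by
            exact mul_le_mul_of_nonneg_left this (norm_nonneg v)
        _ = |f u| * ‖v‖ := by rw [mul_comm]; rfl

lemma dualNorm_norm_eq (f : X →L[ℝ] ℝ) :
    dualNorm (fun v : X => ‖v‖) (fun z => f z) = ‖f‖ := by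
  apply IsGreatest.csSup_eq
  constructor
  · obtain ⟨u, hu1, hu2⟩ := exists_unit_norming f
    exact ⟨u, hu1, hu2.symm⟩
  · rintro r ⟨z, hz, rfl⟩
    calc |f z| = ‖f z‖ := rfl
      _ ≤ ‖f‖ * ‖z‖ := f.le_opNorm z
      _ = ‖f‖ := by have hz' : ‖z‖ = 1 := hz; rw [hz', mul_one]

variable (ω : X →ₗ[ℝ] X →ₗ[ℝ] ℝ)

/-- The continuous functional `u ↦ ω u z`. -/
noncomputable def Gmap : X →ₗ[ℝ] (X →L[ℝ] ℝ) :=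
  (LinearMap.toContinuousLinearMap : (X →ₗ[ℝ] ℝ) ≃ₗ[ℝ] (X →L[ℝ] ℝ)).toLinearMap.comp ω.flip

@[simp] lemma Gmap_apply (z u : X) : Gmap ω z u = ω u z := rfl

lemma antinorm_eq (z : X) : antinorm ω z = ‖Gmap ω z‖ := by
  apply IsGreatest.csSup_eq
  constructor
  · obtain ⟨u, hu1, hu2⟩ := exists_unit_norming (Gmap ω z)
    rcases abs_cases (Gmap ω z u) with ⟨h, _⟩ | ⟨h, _⟩
    · exact ⟨u, hu1, by rw [← hu2, h]; rfl⟩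
    · refine ⟨-u, by simpa using hu1, ?_⟩
      have : ω (-u) z = -(ω u z) := by simp
      rw [this, ← hu2, h]; rfl
  · rintro r ⟨u, hu, rfl⟩
    calc ω u z ≤ |Gmap ω z u| := le_abs_self _
      _ ≤ ‖Gmap ω z‖ * ‖u‖ := (Gmap ω z).le_opNorm u
      _ = ‖Gmap ω z‖ := by rw [hu, mul_one]

lemma Gmap_surjective (hnd : ∀ x : X, (∀ y : X, ω x y = 0) → x = 0)
    (hskew : ∀ x y : X, ω x y = - ω y x) :
    Function.Surjective (Gmap ω) := by
  have hinj : Function.Injective (Gmap ω) := by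
    rw [injective_iff_map_eq_zero]
    intro z hz
    apply hnd
    intro u
    have : ω u z = 0 := by
      have := congrArg (fun f => f u) hz
      simpa using this
    rw [hskew z u, this, neg_zero]
  have hdim : Module.finrank ℝ X = Module.finrank ℝ (X →L[ℝ] ℝ) := by
    rw [← (LinearMap.toContinuousLinearMap :
      (X →ₗ[ℝ] ℝ) ≃ₗ[ℝ] (X →L[ℝ] ℝ)).finrank_eq, Module.finrank_linearMap_self]
  exact (LinearMap.injective_iff_surjective_of_finrank_eq_finrank hdim).1 hinj

lemma dualNorm_antinorm_eq (hnd : ∀ x : X, (∀ y : X, ω x y = 0) → x = 0)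
    (hskew : ∀ x y : X, ω x y = - ω y x) (x : X) (hx : x ≠ 0) :
    dualNorm (antinorm ω) (fun z => ω z x) = ‖x‖ := by
  apply IsGreatest.csSup_eq
  constructor
  · obtain ⟨f, hf1, hf2⟩ := exists_dual_vector ℝ x (norm_ne_zero_iff.2 hx)
    obtain ⟨z, hz⟩ := Gmap_surjective ω hnd hskew f
    refine ⟨z, ?_, ?_⟩
    · rw [antinorm_eq, hz, hf1]
    · have hzx : ω z x = -(f x) := by rw [← hz, Gmap_apply, hskew]
      show ‖x‖ = |ω z x|
      rw [hzx, hf2]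
      simp
  · rintro r ⟨z, hz, rfl⟩
    have hz' : ‖Gmap ω z‖ = 1 := by rw [← antinorm_eq, hz]
    have : ω z x = -(Gmap ω z x) := by rw [Gmap_apply, hskew]
    calc |ω z x| = |Gmap ω z x| := by rw [this, abs_neg]
      _ ≤ ‖Gmap ω z‖ * ‖x‖ := (Gmap ω z).le_opNorm x
      _ = ‖x‖ := by rw [hz', one_mul]

end Aux

/-- For `x, y ≠ 0`, `x ⊥_{‖·‖} Gy` and `y ⊥_{‖·‖ₐ} Gx` are equivalent,
both being equivalent to `|⟨x,y⟩| = ‖x‖ ⋅ ‖y‖ₐ`; here `G y = ⟨·, y⟩`. -/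
theorem stmt5 {X : Type*} [NormedAddCommGroup X] [NormedSpace ℝ X]
    [FiniteDimensional ℝ X] [Nontrivial X] [StrictConvexSpace ℝ X]
    (ω : X →ₗ[ℝ] X →ₗ[ℝ] ℝ)
    (hskew : ∀ x y : X, ω x y = - ω y x)
    (hnd : ∀ x : X, (∀ y : X, ω x y = 0) → x = 0)
    (heven : Even (Module.finrank ℝ X))
    (hsmooth : ∀ x : X, x ≠ 0 → ∃! f : X →L[ℝ] ℝ, ‖f‖ = 1 ∧ f x = ‖x‖)
    (x y : X) (hx : x ≠ 0) (hy : y ≠ 0) :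
    (Perp (fun v : X => ‖v‖) x (fun z => ω z y) ↔ |ω x y| = ‖x‖ * antinorm ω y) ∧
    (|ω x y| = ‖x‖ * antinorm ω y ↔ Perp (antinorm ω) y (fun z => ω z x)) := by
  have h1 : dualNorm (fun v : X => ‖v‖) (fun z => ω z y) = antinorm ω y := by
    rw [antinorm_eq]
    exact dualNorm_norm_eq (Gmap ω y)
  have h2 : dualNorm (antinorm ω) (fun z => ω z x) = ‖x‖ :=
    dualNorm_antinorm_eq ω hnd hskew x hx
  have h3 : |ω y x| = |ω x y| := by rw [hskew y x, abs_neg]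
  constructor
  · unfold Perp
    rw [h1]
  · unfold Perp
    rw [h2, h3, mul_comm]
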